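/- For every signed graph (G,σ), the chromatic number of the strong exact-distance -2 graph of (G,σ) is at most col_2(G)^2 · 2^{col_2(G)}. -/

import Mathlib

open SimpleGraph

/-- The number of negative edges of a walk, where `σ e = true` means edge `e` is negative. -/
def negCount {V : Type} {G : SimpleGraph V} (σ : Sym2 V → Bool) {x y : V}
    (p : G.Walk x y) : ℕ :=
  (p.edges.filter (fun e => σ e)).length

/-- A walk is negative if it contains an odd number of negative edges. -/
def IsNegWalk {V : Type} {G : SimpleGraph V} (σ : Sym2 V → Bool) {x y : V}
    (p : G.Walk x y) : Prop :=
  Odd (negCount σ p)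

/-- The exact-distance `-k` graph of the signed graph `(G, σ)`:
`xy` is an edge iff `d_G(x,y) = k` and every `xy`-path of length `k` is negative. -/
def exactDistNeg {V : Type} (G : SimpleGraph V) (σ : Sym2 V → Bool) (k : ℕ) :
    SimpleGraph V :=
  SimpleGraph.fromRel (fun x y =>
    G.dist x y = k ∧ ∀ p : G.Walk x y, p.IsPath → p.length = k → IsNegWalk σ p)

/-- The strong exact-distance `-k` graph of the signed graph `(G, σ)`:
`xy` is an edge iff `d_G(x,y) = k` and some `xy`-path of length `k` is negative. -/
def strongExactDistNeg {V : Type} (G : SimpleGraph V) (σ : Sym2 V → Bool) (k : ℕ) :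
    SimpleGraph V :=
  SimpleGraph.fromRel (fun x y =>
    G.dist x y = k ∧ ∃ p : G.Walk x y, p.IsPath ∧ p.length = k ∧ IsNegWalk σ p)

/-- `WReach G L k y` : the set of vertices weakly `k`-reachable from `y` w.r.t. ordering `L`. -/
def WReach {V : Type} (G : SimpleGraph V) (L : LinearOrder V) (k : ℕ) (y : V) : Set V :=
  {x | ∃ p : G.Walk x y, p.IsPath ∧ p.length ≤ k ∧ ∀ z ∈ p.support, L.le x z}

/-- The weak `k`-colouring number of `G`. -/
noncomputable def wcol {V : Type} (G : SimpleGraph V) (k : ℕ) : ℕ :=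
  ⨅ L : LinearOrder V, ⨆ y : V, (WReach G L k y).ncard

/-- `DReach G L k y` : the set of vertices `x` such that there is an `xy`-path
`z_0, …, z_s` (`x = z_0`, `y = z_s`) of length `s ≤ k` on which `x` is the `L`-minimum
and `y ≤_L z_i` for all `⌊k/2⌋ + 1 ≤ i ≤ s`. -/
def DReach {V : Type} (G : SimpleGraph V) (L : LinearOrder V) (k : ℕ) (y : V) : Set V :=
  {x | ∃ p : G.Walk x y, p.IsPath ∧ p.length ≤ k ∧ (∀ z ∈ p.support, L.le x z) ∧
        ∀ i, k / 2 + 1 ≤ i → i ≤ p.length → L.le y (p.support.getD i y)}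

/-- The distance-`k`-colouring number of `G`. -/
noncomputable def dcol {V : Type} (G : SimpleGraph V) (k : ℕ) : ℕ :=
  ⨅ L : LinearOrder V, ⨆ y : V, (DReach G L k y).ncard

/-- `SReach G L k y` : the set of vertices strongly `k`-reachable from `y` w.r.t. `L`. -/
def SReach {V : Type} (G : SimpleGraph V) (L : LinearOrder V) (k : ℕ) (y : V) : Set V :=
  {x | ∃ p : G.Walk x y, p.IsPath ∧ p.length ≤ k ∧ (∀ z ∈ p.support, L.le x z) ∧
        ∀ z ∈ p.support, z ≠ x → L.le y z}

/-- The strong `k`-colouring number of `G`. -/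
noncomputable def scol {V : Type} (G : SimpleGraph V) (k : ℕ) : ℕ :=
  ⨅ L : LinearOrder V, ⨆ y : V, (SReach G L k y).ncard

/-- `H` is a minor of `G` (branch-set definition). -/
def IsMinor {W V : Type} (H : SimpleGraph W) (G : SimpleGraph V) : Prop :=
  ∃ B : W → Set V,
    (∀ w, (B w).Nonempty) ∧
    (∀ w, (G.induce (B w)).Connected) ∧
    (Pairwise (Function.onFun Disjoint B)) ∧
    ∀ w w', H.Adj w w' → ∃ u ∈ B w, ∃ v ∈ B w', G.Adj u v

/-- `G` is planar iff it has no `K₅` and no `K₃,₃` minor (Wagner's theorem). -/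
def IsPlanar {V : Type} (G : SimpleGraph V) : Prop :=
  ¬ IsMinor (completeGraph (Fin 5)) G ∧
  ¬ IsMinor (completeBipartiteGraph (Fin 3) (Fin 3)) G

/-- `G` is outerplanar iff it has no `K₄` and no `K₂,₃` minor. -/
def IsOuterplanar {V : Type} (G : SimpleGraph V) : Prop :=
  ¬ IsMinor (completeGraph (Fin 4)) G ∧
  ¬ IsMinor (completeBipartiteGraph (Fin 2) (Fin 3)) G

/-- `G` has treewidth at most `t` (tree-decomposition definition). -/
def HasTreewidthLE {V : Type} (G : SimpleGraph V) (t : ℕ) : Prop :=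
  ∃ (ι : Type) (T : SimpleGraph ι) (B : ι → Finset V),
    T.Connected ∧ T.IsAcyclic ∧
    (∀ v, ∃ i, v ∈ B i) ∧
    (∀ u v, G.Adj u v → ∃ i, u ∈ B i ∧ v ∈ B i) ∧
    (∀ v, (T.induce {i | v ∈ B i}).Connected) ∧
    (∀ i, (B i).card ≤ t + 1)

section AuxProof

variable {V : Type} [Fintype V] {G : SimpleGraph V}

/-- Greedy colouring lemma: a function avoiding colours of a small "earlier" conflict set. -/
private lemma greedy_aux {k : ℕ} (lt : V → V → Prop) (wf : WellFounded lt)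
    (D : V → Finset V) (hD : ∀ v u, u ∈ D v → lt u v)
    (hcard : ∀ v, (D v).card < k) :
    ∃ g : V → Fin k, ∀ v u, u ∈ D v → g u ≠ g v := by
  classical
  have key : ∀ (v : V) (rec : ∀ u, lt u v → Fin k),
      ∃ i : Fin k, ∀ u (h : u ∈ D v), rec u (hD v u h) ≠ i := by
    intro v rec
    set T : Finset (Fin k) := (D v).attach.image (fun u => rec u.1 (hD v u.1 u.2)) with hT
    have hTcard : T.card < Fintype.card (Fin k) := by
      have h1 : T.card ≤ (D v).card := le_trans Finset.card_image_le (le_of_eq (D v).card_attach)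
      have := hcard v
      simp only [Fintype.card_fin]
      omega
    have hne : T ≠ Finset.univ := T.card_lt_iff_ne_univ.mp hTcard
    have : ∃ i : Fin k, i ∉ T := by
      by_contra hcon
      push_neg at hcon
      exact hne (Finset.eq_univ_iff_forall.mpr hcon)
    obtain ⟨i, hi⟩ := this
    refine ⟨i, fun u h hu => hi ?_⟩
    rw [hT]
    exact Finset.mem_image.mpr ⟨⟨u, h⟩, Finset.mem_attach _ _, hu⟩
  refine ⟨wf.fix (fun v rec => (key v rec).choose), fun v u hu => ?_⟩
  have hfix := wf.fix_eq (fun v rec => (key v rec).choose) v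
  rw [hfix]
  exact (key v (fun u _ => wf.fix (fun v rec => (key v rec).choose) u)).choose_spec u hu

private lemma sreach_le (L : LinearOrder V) {x y : V} (hx : x ∈ SReach G L 2 y) :
    L.le x y := by
  obtain ⟨p, _, _, h, _⟩ := hx
  exact h y p.end_mem_support

private lemma mem_sreach_self (L : LinearOrder V) (v : V) : v ∈ SReach G L 2 v := by
  refine ⟨SimpleGraph.Walk.nil, SimpleGraph.Walk.IsPath.nil, by simp, ?_, ?_⟩
  · intro z hz
    simp only [SimpleGraph.Walk.support_nil, List.mem_singleton] at hz
    exact hz ▸ L.le_refl v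
  · intro z hz hne
    simp only [SimpleGraph.Walk.support_nil, List.mem_singleton] at hz
    exact absurd hz hne

private lemma adj_mem_sreach (L : LinearOrder V) {w v : V} (h : G.Adj w v) (hle : L.le w v) :
    w ∈ SReach G L 2 v := by
  refine ⟨SimpleGraph.Walk.cons h SimpleGraph.Walk.nil, ?_, by simp, ?_, ?_⟩
  · rw [SimpleGraph.Walk.isPath_def]
    simp [h.ne]
  · intro z hz
    simp only [SimpleGraph.Walk.support_cons, SimpleGraph.Walk.support_nil,
      List.mem_cons, List.mem_singleton, List.not_mem_nil, or_false] at hz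
    rcases hz with rfl | rfl
    · exact L.le_refl z
    · exact hle
  · intro z hz hne
    simp only [SimpleGraph.Walk.support_cons, SimpleGraph.Walk.support_nil,
      List.mem_cons, List.mem_singleton, List.not_mem_nil, or_false] at hz
    rcases hz with rfl | rfl
    · exact absurd rfl hne
    · exact L.le_refl _

private lemma two_path_mem_sreach (L : LinearOrder V) {u w v : V}
    (h1 : G.Adj u w) (h2 : G.Adj w v) (huv : u ≠ v) (hle : L.le u v) (hvw : L.le v w) :
    u ∈ SReach G L 2 v := by
  refine ⟨SimpleGraph.Walk.cons h1 (SimpleGraph.Walk.cons h2 SimpleGraph.Walk.nil), ?_,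
    by simp, ?_, ?_⟩
  · rw [SimpleGraph.Walk.isPath_def]
    simp [h1.ne, h2.ne, huv]
  · intro z hz
    simp only [SimpleGraph.Walk.support_cons, SimpleGraph.Walk.support_nil,
      List.mem_cons, List.mem_singleton, List.not_mem_nil, or_false] at hz
    rcases hz with rfl | rfl | rfl
    · exact L.le_refl z
    · exact L.le_trans _ _ _ hle hvw
    · exact hle
  · intro z hz hne
    simp only [SimpleGraph.Walk.support_cons, SimpleGraph.Walk.support_nil,
      List.mem_cons, List.mem_singleton, List.not_mem_nil, or_false] at hz
    rcases hz with rfl | rfl | rfl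
    · exact absurd rfl hne
    · exact hvw
    · exact L.le_refl _

private lemma extract_mid {u v : V} (σ : Sym2 V → Bool) (p : G.Walk u v)
    (hlen : p.length = 2) (hneg : IsNegWalk σ p) :
    ∃ w, G.Adj u w ∧ G.Adj w v ∧ σ s(u, w) ≠ σ s(w, v) := by
  cases p with
  | nil => simp at hlen
  | cons h q =>
    cases q with
    | nil => simp at hlen
    | cons h' q' =>
      cases q' with
      | nil =>
        rename_i w
        refine ⟨w, h, h', ?_⟩
        unfold IsNegWalk negCount at hneg
        simp only [SimpleGraph.Walk.edges_cons, SimpleGraph.Walk.edges_nil] at hneg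
        cases hσ1 : σ s(u, w) <;> cases hσ2 : σ s(w, v) <;>
          simp [hσ1, hσ2, List.filter_cons, Nat.odd_iff] at hneg ⊢
      | cons h'' q'' => simp at hlen

private lemma neg_reverse {u v : V} (σ : Sym2 V → Bool) (p : G.Walk u v)
    (hneg : IsNegWalk σ p) : IsNegWalk σ p.reverse := by
  unfold IsNegWalk negCount at hneg ⊢
  rwa [SimpleGraph.Walk.edges_reverse, List.filter_reverse, List.length_reverse]

end AuxProof

theorem strongExactDistNeg_two_chromatic_le_scol_sq_mul_pow
    {V : Type} [Fintype V] (G : SimpleGraph V) (σ : Sym2 V → Bool) :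
    (strongExactDistNeg G σ 2).chromaticNumber ≤
      (((scol G 2) ^ 2 * 2 ^ (scol G 2) : ℕ) : ℕ∞) := by
  classical
  have hLO : Nonempty (LinearOrder V) :=
    ⟨LinearOrder.lift' (Fintype.equivFin V) (Fintype.equivFin V).injective⟩
  -- choose an order achieving the strong 2-colouring number
  obtain ⟨L, hL⟩ : ∃ L : LinearOrder V,
      (⨆ y : V, (SReach G L 2 y).ncard) = scol G 2 := by
    have h := Nat.sInf_mem
      (Set.range_nonempty (fun L : LinearOrder V => ⨆ y : V, (SReach G L 2 y).ncard))
    rw [sInf_range] at h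
    exact h
  set sc := scol G 2 with hsc
  have hR : ∀ y : V, (SReach G L 2 y).ncard ≤ sc := by
    intro y
    rw [← hL]
    exact le_ciSup (f := fun y : V => (SReach G L 2 y).ncard)
      (Set.Finite.bddAbove (Set.finite_range _)) y
  letI : LinearOrder V := L
  have wf : WellFounded L.lt := (Finite.to_wellFoundedLT (α := V)).wf
  -- first greedy colouring
  set D₁ : V → Finset V := fun v => (SReach G L 2 v \ {v}).toFinset with hD₁def
  have hD₁mem : ∀ {u v : V}, u ∈ D₁ v ↔ u ∈ SReach G L 2 v ∧ u ≠ v := by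
    intro u v
    simp [hD₁def]
  have hD₁lt : ∀ v u, u ∈ D₁ v → L.lt u v := by
    intro v u hu
    obtain ⟨hus, hune⟩ := hD₁mem.mp hu
    exact L.lt_iff_le_not_ge _ _ |>.mpr ⟨sreach_le L hus,
      fun h => hune (L.le_antisymm _ _ (sreach_le L hus) h)⟩
  have hD₁card : ∀ v, (D₁ v).card < sc := by
    intro v
    rw [hD₁def]
    rw [← Set.ncard_eq_toFinset_card']
    exact lt_of_lt_of_le
      (Set.ncard_diff_singleton_lt_of_mem (mem_sreach_self L v) (Set.toFinite _)) (hR v)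
  obtain ⟨g₁, hg₁⟩ := greedy_aux L.lt wf D₁ hD₁lt hD₁card
  -- g₁ is injective on lower neighbourhoods
  have hinj : ∀ (v x x' : V), G.Adj x v → G.Adj x' v → L.lt x v → L.lt x' v → x ≠ x' →
      g₁ x ≠ g₁ x' := by
    have key : ∀ (v x x' : V), G.Adj x v → G.Adj x' v → L.lt x v → L.lt x' v → L.lt x x' →
        g₁ x ≠ g₁ x' := by
      intro v x x' hx hx' hxv hx'v hxx'
      refine hg₁ x' x (hD₁mem.mpr ⟨?_, ne_of_lt hxx'⟩)
      exact two_path_mem_sreach L hx hx'.symm (ne_of_lt hxx') (le_of_lt hxx') (le_of_lt hx'v)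
    intro v x x' hx hx' hxv hx'v hne
    rcases lt_trichotomy x x' with h | h | h
    · exact key v x x' hx hx' hxv hx'v h
    · exact absurd h hne
    · exact (key v x' x hx' hx hx'v hxv h).symm
  -- second greedy colouring
  set P₂ : V → V → Prop :=
    fun u v => g₁ u = g₁ v ∧ ∃ w, G.Adj u w ∧ G.Adj w v ∧ L.lt u w ∧ L.lt w v with hP₂def
  set D₂ : V → Finset V := fun v => Finset.univ.filter (fun u => P₂ u v) with hD₂def
  have hD₂mem : ∀ {u v : V}, u ∈ D₂ v ↔ P₂ u v := by
    intro u v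
    simp [hD₂def]
  have hD₂lt : ∀ v u, u ∈ D₂ v → L.lt u v := by
    intro v u hu
    obtain ⟨_, w, _, _, h1, h2⟩ := hD₂mem.mp hu
    exact lt_trans h1 h2
  have hD₂card : ∀ v, (D₂ v).card < sc := by
    intro v
    have hmap : ∀ u ∈ D₂ v, (fun u => if h : ∃ w, G.Adj u w ∧ G.Adj w v ∧ L.lt u w ∧ L.lt w v
        then h.choose else v) u ∈ D₁ v := by
      intro u hu
      obtain ⟨_, hex⟩ := hD₂mem.mp hu
      simp only [dif_pos hex]
      obtain ⟨_, hwv, _, hltwv⟩ := hex.choose_spec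
      exact hD₁mem.mpr ⟨adj_mem_sreach L hwv (le_of_lt hltwv), ne_of_lt hltwv⟩
    have hinjOn : Set.InjOn (fun u => if h : ∃ w, G.Adj u w ∧ G.Adj w v ∧ L.lt u w ∧ L.lt w v
        then h.choose else v) (D₂ v : Set V) := by
      intro u hu u' hu' heq
      by_contra hne
      obtain ⟨hgu, hexu⟩ := hD₂mem.mp hu
      obtain ⟨hgu', hexu'⟩ := hD₂mem.mp hu'
      simp only [dif_pos hexu, dif_pos hexu'] at heq
      obtain ⟨hadj1, _, hlt1, _⟩ := hexu.choose_spec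
      obtain ⟨hadj1', _, hlt1', _⟩ := hexu'.choose_spec
      rw [heq] at hadj1 hlt1
      exact hinj hexu'.choose u u' hadj1 hadj1' hlt1 hlt1' hne (by rw [hgu, hgu'])
    calc (D₂ v).card ≤ (D₁ v).card := Finset.card_le_card_of_injOn _ hmap hinjOn
      _ < sc := hD₁card v
  obtain ⟨g₂, hg₂⟩ := greedy_aux L.lt wf D₂ hD₂lt hD₂card
  -- sign profile
  set F : V → Fin sc → Bool :=
    fun v i => decide (∃ w, G.Adj w v ∧ L.lt w v ∧ g₁ w = i ∧ σ s(w, v) = true) with hFdef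
  have hF : ∀ {w v : V}, G.Adj w v → L.lt w v → F v (g₁ w) = σ s(w, v) := by
    intro w v hadj hlt
    cases hσ : σ s(w, v) with
    | true =>
      simp only [hFdef]
      exact decide_eq_true ⟨w, hadj, hlt, rfl, hσ⟩
    | false =>
      simp only [hFdef]
      apply decide_eq_false
      rintro ⟨w', hadj', hlt', hgw', hσ'⟩
      have : w' = w := by
        by_contra hne
        exact hinj v w' w hadj' hadj hlt' hlt hne hgw'
      rw [this] at hσ'
      rw [hσ'] at hσ
      exact Bool.noConfusion hσ
  -- the colouring
  set c : V → Fin sc × Fin sc × (Fin sc → Bool) := fun v => (g₁ v, g₂ v, F v) with hcdef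
  have main : ∀ u v : V, L.lt u v →
      (∃ w, G.Adj u w ∧ G.Adj w v ∧ σ s(u, w) ≠ σ s(w, v)) → c u ≠ c v := by
    rintro u v huv ⟨w, h1, h2, hσ⟩ hc
    have hg1 : g₁ u = g₁ v := congrArg Prod.fst hc
    have hg2 : g₂ u = g₂ v := congrArg (fun p => p.2.1) hc
    have hgF : F u = F v := congrArg (fun p => p.2.2) hc
    rcases lt_trichotomy v w with hvw | hvw | hvw
    · -- w above v : u strongly reachable from v
      exact hg₁ v u (hD₁mem.mpr ⟨two_path_mem_sreach L h1 h2 (ne_of_lt huv)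
        (le_of_lt huv) (le_of_lt hvw), ne_of_lt huv⟩) hg1
    · exact h2.ne hvw.symm
    · rcases lt_trichotomy u w with huw | huw | huw
      · -- u < w < v : second greedy colouring
        exact hg₂ v u (hD₂mem.mpr ⟨hg1, w, h1, h2, huw, hvw⟩) hg2
      · exact h1.ne huw
      · -- w < u : sign profiles differ
        have hFu : F u (g₁ w) = σ s(w, u) := hF h1.symm huw
        have hFv : F v (g₁ w) = σ s(w, v) := hF h2 hvw
        rw [hgF] at hFu
        rw [hFv] at hFu
        rw [Sym2.eq_swap (a := w) (b := u)] at hFu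
        exact hσ hFu.symm
  -- build the colouring of the exact distance graph
  have hcol : (strongExactDistNeg G σ 2).Colorable
      (Fintype.card (Fin sc × Fin sc × (Fin sc → Bool))) := by
    refine SimpleGraph.Coloring.colorable (SimpleGraph.Coloring.mk c ?_)
    intro a b hab
    rw [strongExactDistNeg, SimpleGraph.fromRel_adj] at hab
    obtain ⟨hne, hrel⟩ := hab
    have hget : ∀ x y : V, ((G.dist x y = 2 ∧
        ∃ p : G.Walk x y, p.IsPath ∧ p.length = 2 ∧ IsNegWalk σ p) ∨
        (G.dist y x = 2 ∧ ∃ p : G.Walk y x, p.IsPath ∧ p.length = 2 ∧ IsNegWalk σ p)) →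
        ∃ w, G.Adj x w ∧ G.Adj w y ∧ σ s(x, w) ≠ σ s(w, y) := by
      rintro x y (⟨-, p, -, hlen, hneg⟩ | ⟨-, p, -, hlen, hneg⟩)
      · exact extract_mid σ p hlen hneg
      · exact extract_mid σ p.reverse (by rw [SimpleGraph.Walk.length_reverse, hlen])
          (neg_reverse σ p hneg)
    rcases lt_trichotomy a b with hlt | hlt | hlt
    · exact main a b hlt (hget a b hrel)
    · exact absurd hlt hne
    · exact (main b a hlt (hget b a (Or.symm hrel))).symm
  have hcard : Fintype.card (Fin sc × Fin sc × (Fin sc → Bool)) = sc ^ 2 * 2 ^ sc := by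
    simp [Fintype.card_fun]
    ring
  rw [hcard] at hcol
  exact hcol.chromaticNumber_le
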